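/- Let b be a positive integer, let a be an integer coprime to b, and let a* be any integer with a*·a ≡ −1 (mod b). Then for every natural number m one has Σ_{j=0}^{m−1} ((ja/b)) = −(1/2)·((ma/b)) − s(a*, b; m/b, 0) + s(a*, b). -/

import Mathlib

/-- The sawtooth function `((x))`: it is `0` for integers `x`, and `x - ⌊x⌋ - 1/2` otherwise. -/
noncomputable def saw (x : ℝ) : ℝ := if Int.fract x = 0 then 0 else Int.fract x - 1/2

/-- The generalized Dedekind sum `s(a, b; x, y) = Σ_{i=0}^{b-1} (((i+y)/b))·((a(i+y)/b + x))`. -/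
noncomputable def dsum (a b : ℤ) (x y : ℝ) : ℝ :=
  ∑ i ∈ Finset.range b.toNat,
    saw (((i : ℝ) + y) / (b : ℝ)) * saw ((a : ℝ) * ((i : ℝ) + y) / (b : ℝ) + x)


lemma fract_int_div (b k : ℤ) (hb : 0 < b) :
    Int.fract ((k:ℝ)/(b:ℝ)) = ((k % b : ℤ):ℝ)/(b:ℝ) := by
  have hbn : ((b.toNat : ℕ) : ℝ) = (b : ℝ) := by exact_mod_cast congrArg (Int.cast : ℤ → ℝ) (Int.toNat_of_nonneg hb.le)
  have h2 : k % (b.toNat : ℤ) = k % b := by rw [Int.toNat_of_nonneg hb.le]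
  rw [← hbn, Int.fract_div_intCast_eq_div_intCast_mod, h2]

lemma saw_eq (b k : ℤ) (hb : 0 < b) :
    saw ((k:ℝ)/(b:ℝ)) = if b ∣ k then 0 else ((k % b : ℤ):ℝ)/(b:ℝ) - 1/2 := by
  have hb' : (b:ℝ) ≠ 0 := by positivity
  rw [saw, fract_int_div b k hb]
  by_cases h : b ∣ k
  · simp [h, Int.emod_eq_zero_of_dvd h]
  · have h1 : k % b ≠ 0 := fun hc => h (Int.dvd_of_emod_eq_zero hc)
    have h2 : ((k % b : ℤ):ℝ)/(b:ℝ) ≠ 0 := by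
      rw [div_ne_zero_iff]
      exact ⟨by exact_mod_cast h1, hb'⟩
    simp [h2, h]

lemma saw_congr (b k k' : ℤ) (hb : 0 < b) (h : k % b = k' % b) :
    saw ((k:ℝ)/(b:ℝ)) = saw ((k':ℝ)/(b:ℝ)) := by
  rw [saw_eq b k hb, saw_eq b k' hb, h]
  have : b ∣ k ↔ b ∣ k' := by
    rw [Int.dvd_iff_emod_eq_zero, Int.dvd_iff_emod_eq_zero, h]
  simp [this]

lemma saw_sub_saw (b k : ℤ) (hb : 0 < b) :
    saw ((k:ℝ)/(b:ℝ)) - saw (((k+1 : ℤ):ℝ)/(b:ℝ)) =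
      -1/(b:ℝ) + (if b ∣ k then (1:ℝ)/2 else 0) + (if b ∣ (k+1) then (1:ℝ)/2 else 0) := by
  have hb' : (b:ℝ) ≠ 0 := by positivity
  rcases eq_or_lt_of_le (show (1:ℤ) ≤ b by omega) with h1 | h2
  · have hb1 : b = 1 := h1.symm
    subst hb1
    rw [saw_eq 1 k one_pos, saw_eq 1 (k+1) one_pos]
    norm_num
  · by_cases hk : b ∣ k
    · have hk1 : ¬ b ∣ (k+1) := by
        intro hc
        have h1 : b ∣ 1 := (Int.dvd_add_right hk).mp hc
        have := Int.le_of_dvd one_pos h1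
        omega
      have hmod : (k+1) % b = 1 := by
        obtain ⟨t, rfl⟩ := hk
        rw [add_comm, Int.add_mul_emod_self_left]
        exact Int.emod_eq_of_lt (by norm_num) (by omega)
      rw [saw_eq b k hb, saw_eq b (k+1) hb, hmod]
      simp [hk, hk1]
      push_cast
      ring
    · by_cases hk1 : b ∣ (k+1)
      · obtain ⟨t, ht⟩ := hk1
        have hke : k = -1 + b * t := by linarith
        have hmod : k % b = b - 1 := by
          rw [hke, Int.add_mul_emod_self_left,
            show (-1 : ℤ) = (b - 1) - b by ring, Int.sub_emod_right]
          exact Int.emod_eq_of_lt (by omega) (by omega)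
        rw [saw_eq b k hb, saw_eq b (k+1) hb, hmod]
        have hk1' : b ∣ (k+1) := ⟨t, ht⟩
        simp [hk, hk1']
        push_cast
        field_simp
        ring
      · have hr0 : k % b ≠ 0 := fun h => hk (Int.dvd_of_emod_eq_zero h)
        have hrlt : k % b < b - 1 := by
          have h1 : k % b < b := Int.emod_lt_of_pos k hb
          rcases eq_or_lt_of_le (by omega : k % b ≤ b - 1) with he | hl
          · exfalso
            apply hk1
            have : (k + 1) % b = 0 := by
              rw [Int.add_emod, he,
                Int.emod_eq_of_lt (by omega) (by omega : (1:ℤ) < b),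
                show b - 1 + 1 = b by ring]
              simp
            exact Int.dvd_of_emod_eq_zero this
          · exact hl
        have hr1 : (k+1) % b = k % b + 1 := by
          rw [Int.add_emod,
            Int.emod_eq_of_lt (by omega) (by omega : (1:ℤ) < b),
            Int.emod_eq_of_lt (by have := Int.emod_nonneg k (by omega : b ≠ 0); omega) (by omega)]
        rw [saw_eq b k hb, saw_eq b (k+1) hb, hr1]
        simp [hk, hk1]
        push_cast
        field_simp
        ring

lemma sum_saw_zero (b : ℤ) (hb : 0 < b) :
    ∑ i ∈ Finset.range b.toNat, saw ((i:ℝ)/(b:ℝ)) = 0 := by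
  have hb' : (b:ℝ) ≠ 0 := by positivity
  have hbn : ((b.toNat : ℕ) : ℝ) = (b : ℝ) := by
    exact_mod_cast congrArg (Int.cast : ℤ → ℝ) (Int.toNat_of_nonneg hb.le)
  set n := b.toNat with hn_def
  have hn : 1 ≤ n := by omega
  have key : ∀ i ∈ Finset.range n,
      saw ((i:ℝ)/(b:ℝ)) = (i:ℝ)/(b:ℝ) - 1/2 + (if i = 0 then (1:ℝ)/2 else 0) := by
    intro i hi
    rw [Finset.mem_range] at hi
    have hib : (i : ℤ) < b := by omega
    have hcast : ((i:ℤ):ℝ) = (i:ℝ) := by push_cast; ring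
    rw [← hcast, saw_eq b i hb]
    by_cases h0 : i = 0
    · subst h0; simp
    · have hnd : ¬ b ∣ (i:ℤ) := by
        intro hc
        have := Int.le_of_dvd (by exact_mod_cast Nat.pos_of_ne_zero h0) hc
        omega
      have hmod : (i:ℤ) % b = i := Int.emod_eq_of_lt (by positivity) hib
      simp [hnd, h0, hmod]
  rw [Finset.sum_congr rfl key]
  have gauss : (∑ i ∈ Finset.range n, (i:ℝ)) = (n:ℝ) * ((n:ℝ) - 1) / 2 := by
    have h := congrArg (Nat.cast : ℕ → ℝ) (Finset.sum_range_id_mul_two n)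
    push_cast [Nat.cast_sub hn] at h
    linarith
  have split : ∑ i ∈ Finset.range n, ((i:ℝ)/(b:ℝ) - 1/2 + if i = 0 then (1:ℝ)/2 else 0) =
      (∑ i ∈ Finset.range n, (i:ℝ))/(b:ℝ) - (n:ℝ)*(1/2) + 1/2 := by
    rw [Finset.sum_add_distrib, Finset.sum_sub_distrib, ← Finset.sum_div,
      Finset.sum_const, Finset.card_range,
      Finset.sum_ite_eq' (Finset.range n) 0 (fun _ => (1:ℝ)/2)]
    simp only [Finset.mem_range, nsmul_eq_mul]
    rw [if_pos (by omega)]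
  rw [split, gauss, ← hbn]
  have hn' : (n:ℝ) ≠ 0 := by
    have : n ≠ 0 := by omega
    exact_mod_cast this
  field_simp
  ring

lemma sum_saw_indicator (b : ℤ) (hb : 0 < b) (astar c d : ℤ) (hcop : IsCoprime astar b)
    (hd : b ∣ astar * d + c) :
    ∑ i ∈ Finset.range b.toNat,
      saw (((i:ℕ):ℝ)/(b:ℝ)) * (if b ∣ astar * (i:ℕ) + c then (1:ℝ) else 0)
      = saw ((d:ℝ)/(b:ℝ)) := by
  set i₀ : ℕ := (d % b).toNat with hi₀
  have hdb0 : 0 ≤ d % b := Int.emod_nonneg d (by omega)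
  have hdbb : d % b < b := Int.emod_lt_of_pos d hb
  have hi₀z : (i₀ : ℤ) = d % b := Int.toNat_of_nonneg hdb0
  have hmem : i₀ ∈ Finset.range b.toNat := by
    rw [Finset.mem_range]; omega
  have hi₀dvd : b ∣ astar * (i₀:ℤ) + c := by
    have h1 : (i₀:ℤ) = d - b * (d / b) := by rw [hi₀z, Int.emod_def]
    rw [h1]
    have : astar * (d - b * (d / b)) + c = (astar * d + c) - b * (astar * (d/b)) := by ring
    rw [this]
    exact dvd_sub hd ⟨astar * (d/b), rfl⟩
  rw [Finset.sum_eq_single_of_mem i₀ hmem]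
  · rw [if_pos hi₀dvd, mul_one]
    have : ((i₀:ℕ):ℝ) = ((i₀:ℤ):ℝ) := by push_cast; ring
    rw [this]
    apply saw_congr b _ _ hb
    rw [hi₀z, Int.emod_emod_of_dvd _ (dvd_refl b)]
  · intro j hj hne
    rw [Finset.mem_range] at hj
    rw [if_neg, mul_zero]
    intro hc
    have hdiff : b ∣ astar * ((j:ℤ) - (i₀:ℤ)) := by
      have : astar * ((j:ℤ) - (i₀:ℤ)) = (astar * j + c) - (astar * i₀ + c) := by ring
      rw [this]
      exact dvd_sub hc hi₀dvd
    have hdvd2 : b ∣ ((j:ℤ) - (i₀:ℤ)) := (hcop.symm).dvd_of_dvd_mul_left hdiff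
    have : ((j:ℤ) - (i₀:ℤ)) = 0 := by
      refine Int.eq_zero_of_abs_lt_dvd hdvd2 ?_
      rw [abs_lt]
      constructor <;> omega
    apply hne
    omega

lemma coprime_astar (b a astar : ℤ) (hstar : astar * a ≡ -1 [ZMOD b]) :
    IsCoprime astar b := by
  obtain ⟨t, ht⟩ := Int.ModEq.dvd hstar
  exact ⟨-a, -t, by linarith⟩

lemma dsum_sub (b a astar : ℤ) (hb : 0 < b) (hstar : astar * a ≡ -1 [ZMOD b]) (c : ℤ) :
    dsum astar b ((c:ℝ)/(b:ℝ)) 0 - dsum astar b (((c+1:ℤ):ℝ)/(b:ℝ)) 0 =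
      (1/2) * saw (((c*a : ℤ):ℝ)/(b:ℝ)) + (1/2) * saw ((((c+1)*a : ℤ):ℝ)/(b:ℝ)) := by
  have hcop := coprime_astar b a astar hstar
  obtain ⟨t, ht⟩ := Int.ModEq.dvd hstar
  have hb' : (b:ℝ) ≠ 0 := by positivity
  rw [dsum, dsum, ← Finset.sum_sub_distrib]
  have step : ∀ i ∈ Finset.range b.toNat,
      (saw ((((i:ℕ):ℝ) + 0)/(b:ℝ)) * saw ((astar:ℝ) * (((i:ℕ):ℝ) + 0) / (b:ℝ) + (c:ℝ)/(b:ℝ))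
        - saw ((((i:ℕ):ℝ) + 0)/(b:ℝ)) * saw ((astar:ℝ) * (((i:ℕ):ℝ) + 0) / (b:ℝ) + ((c+1:ℤ):ℝ)/(b:ℝ)))
      = saw (((i:ℕ):ℝ)/(b:ℝ)) * (-1/(b:ℝ))
        + (1/2) * (saw (((i:ℕ):ℝ)/(b:ℝ)) * (if b ∣ astar * (i:ℕ) + c then (1:ℝ) else 0))
        + (1/2) * (saw (((i:ℕ):ℝ)/(b:ℝ)) * (if b ∣ astar * (i:ℕ) + (c+1) then (1:ℝ) else 0)) := by
    intro i hi
    have e1 : (astar:ℝ) * (((i:ℕ):ℝ) + 0) / (b:ℝ) + (c:ℝ)/(b:ℝ)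
        = ((astar * (i:ℕ) + c : ℤ):ℝ)/(b:ℝ) := by push_cast; ring
    have e2 : (astar:ℝ) * (((i:ℕ):ℝ) + 0) / (b:ℝ) + ((c+1:ℤ):ℝ)/(b:ℝ)
        = (((astar * (i:ℕ) + c) + 1 : ℤ):ℝ)/(b:ℝ) := by push_cast; ring
    rw [e1, e2, add_zero, ← mul_sub, saw_sub_saw b (astar * (i:ℕ) + c) hb]
    have e3 : astar * ((i:ℕ):ℤ) + (c+1) = (astar * (i:ℕ) + c) + 1 := by ring
    rw [e3]
    by_cases h1 : b ∣ astar * ((i:ℕ):ℤ) + c <;>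
      by_cases h2 : b ∣ (astar * ((i:ℕ):ℤ) + c) + 1 <;>
      simp [h1, h2] <;> ring
  rw [Finset.sum_congr rfl step, Finset.sum_add_distrib, Finset.sum_add_distrib]
  have s1 : ∑ i ∈ Finset.range b.toNat, saw (((i:ℕ):ℝ)/(b:ℝ)) * (-1/(b:ℝ)) = 0 := by
    rw [← Finset.sum_mul, sum_saw_zero b hb, zero_mul]
  have d1 : b ∣ astar * (c*a) + c := ⟨-(c*t), by linear_combination (-c) * ht⟩
  have d2 : b ∣ astar * ((c+1)*a) + (c+1) := ⟨-((c+1)*t), by linear_combination (-(c+1)) * ht⟩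
  have s2 := sum_saw_indicator b hb astar c (c*a) hcop d1
  have s3 := sum_saw_indicator b hb astar (c+1) ((c+1)*a) hcop d2
  rw [s1, ← Finset.mul_sum, ← Finset.mul_sum, s2, s3]
  ring

lemma saw_zero : saw 0 = 0 := by simp [saw]

/-- for `b > 0`, `a` coprime to `b`, and `a* · a ≡ -1 (mod b)`, one has
`Σ_{j=0}^{m−1} ((ja/b)) = −(1/2)·((ma/b)) − s(a*, b; m/b, 0) + s(a*, b)`. -/
theorem sum_sawtooth_eq_dedekind (b : ℤ) (hb : 0 < b) (a : ℤ) (hab : IsCoprime a b)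
    (astar : ℤ) (hstar : astar * a ≡ -1 [ZMOD b]) (m : ℕ) :
    ∑ j ∈ Finset.range m, saw ((j : ℝ) * (a : ℝ) / (b : ℝ)) =
      -(1/2) * saw ((m : ℝ) * (a : ℝ) / (b : ℝ))
        - dsum astar b ((m : ℝ) / (b : ℝ)) 0 + dsum astar b 0 0 := by
  induction m with
  | zero =>
    simp [saw_zero]
  | succ m ih =>
    rw [Finset.sum_range_succ, ih]
    have key := dsum_sub b a astar hb hstar (m:ℤ)
    push_cast at key ⊢
    linarith
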